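/- Let g,f be nonnegative measurable functions on (X,A,μ) with distribution functions G,F finite on (0,∞). Suppose ∫(f^{s₀}−g^{s₀}) dμ = 0 for some s₀>0, and there is λ₀>0 with F(λ)≤G(λ) on (0,λ₀) and F(λ)≥G(λ) on (λ₀,∞). Then ∫(f^s − g^s) dμ ≥ 0 for all s ≥ s₀ with f^s−g^s integrable. -/

import Mathlib

open MeasureTheory Set
open scoped ENNReal

namespace NPaux

variable {X : Type*} [MeasurableSpace X]

lemma sigmaFinite_restrict (μ : Measure X) (v : X → ℝ) (hv : Measurable v)
    (hvfin : ∀ l : ℝ, 0 < l → μ {x | l < v x} ≠ ⊤) :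
    SigmaFinite (μ.restrict {x | 0 < v x}) := by
  have hSm : MeasurableSet {x | 0 < v x} := measurableSet_lt measurable_const hv
  constructor
  refine ⟨⟨fun n => {x | 1/(n+1) < v x} ∪ {x | 0 < v x}ᶜ, fun _ => trivial, fun n => ?_, ?_⟩⟩
  · have h1 : (0:ℝ) < 1/(n+1) := by positivity
    refine lt_of_le_of_lt (measure_union_le _ _) ?_
    have h2 : μ.restrict {x | 0 < v x} {x | 1/(n+1:ℝ) < v x} ≤ μ {x | 1/(n+1:ℝ) < v x} := by
      rw [Measure.restrict_apply (measurableSet_lt measurable_const hv)]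
      exact measure_mono inter_subset_left
    have h3 : μ.restrict {x | 0 < v x} {x | 0 < v x}ᶜ = 0 := by
      rw [Measure.restrict_apply hSm.compl]
      simp
    rw [h3, add_zero]
    exact lt_of_le_of_lt h2 (hvfin _ h1).lt_top
  · rw [eq_univ_iff_forall]
    intro x
    by_cases hx : 0 < v x
    · obtain ⟨n, hn⟩ := exists_nat_one_div_lt hx
      exact mem_iUnion.2 ⟨n, Or.inl hn⟩
    · exact mem_iUnion.2 ⟨0, Or.inr hx⟩

lemma keyA (μ : Measure X) [SigmaFinite μ] {u v : X → ℝ}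
    (hu : Measurable u) (hv : Measurable v) (hu0 : ∀ x, 0 ≤ u x) (huv : ∀ x, u x ≤ v x)
    (hufin : ∀ l : ℝ, 0 < l → μ {x | l < u x} ≠ ⊤)
    {s : ℝ} (hs : 0 < s) :
    ∫⁻ x, ENNReal.ofReal (v x ^ s - u x ^ s) ∂μ
      = ∫⁻ l in Ioi (0:ℝ),
          ENNReal.ofReal (s * l ^ (s-1)) * (μ {x | l < v x} - μ {x | l < u x}) := by
  have inner : ∀ x, ENNReal.ofReal (v x ^ s - u x ^ s)
      = ∫⁻ l in Ioi (0:ℝ),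
          (Ico (u x) (v x)).indicator (fun l => ENNReal.ofReal (s * l ^ (s-1))) l := by
    intro x
    have ha : 0 ≤ u x := hu0 x
    have hab : u x ≤ v x := huv x
    rw [lintegral_indicator measurableSet_Ico, Measure.restrict_restrict measurableSet_Ico]
    have hset : (Ico (u x) (v x) ∩ Ioi 0 : Set ℝ) =ᵐ[volume] Ioo (u x) (v x) := by
      rw [MeasureTheory.ae_eq_set]
      constructor
      · refine measure_mono_null (fun l hl => ?_) (measure_singleton (u x))
        obtain ⟨⟨⟨h1, h2⟩, _⟩, h4⟩ := hl
        have : ¬ u x < l := fun h => h4 ⟨h, h2⟩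
        exact le_antisymm (not_lt.1 this) h1
      · have he : Ioo (u x) (v x) \ (Ico (u x) (v x) ∩ Ioi 0) = ∅ := by
          rw [eq_empty_iff_forall_notMem]
          rintro l ⟨⟨h1, h2⟩, h3⟩
          exact h3 ⟨⟨h1.le, h2⟩, lt_of_le_of_lt ha h1⟩
        rw [he]
        exact measure_empty
    rw [setLIntegral_congr hset]
    have hint : IntegrableOn (fun l => s * l ^ (s-1)) (Ioo (u x) (v x)) := by
      have h1 : IntervalIntegrable (fun l : ℝ => l ^ (s-1)) volume (u x) (v x) :=
        intervalIntegral.intervalIntegrable_rpow' (by linarith)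
      have h2 := h1.const_mul s
      rwa [intervalIntegrable_iff_integrableOn_Ioo_of_le hab] at h2
    have hnnl : 0 ≤ᵐ[volume.restrict (Ioo (u x) (v x))] fun l => s * l ^ (s-1) := by
      filter_upwards [self_mem_ae_restrict measurableSet_Ioo] with l hl
      exact mul_nonneg hs.le (Real.rpow_nonneg (le_of_lt (lt_of_le_of_lt ha hl.1)) _)
    rw [← ofReal_integral_eq_lintegral_ofReal hint hnnl]
    congr 1
    rw [← integral_Ioc_eq_integral_Ioo, ← intervalIntegral.integral_of_le hab,
      intervalIntegral.integral_const_mul, integral_rpow (Or.inl (by linarith : (-1:ℝ) < s - 1))]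
    have hs1 : s - 1 + 1 = s := by ring
    rw [hs1]
    field_simp
  calc ∫⁻ x, ENNReal.ofReal (v x ^ s - u x ^ s) ∂μ
      = ∫⁻ x, (∫⁻ l in Ioi (0:ℝ),
          (Ico (u x) (v x)).indicator (fun l => ENNReal.ofReal (s * l ^ (s-1))) l) ∂μ :=
        lintegral_congr inner
    _ = ∫⁻ l in Ioi (0:ℝ), ∫⁻ x,
          (Ico (u x) (v x)).indicator (fun l => ENNReal.ofReal (s * l ^ (s-1))) l ∂μ := by
        apply lintegral_lintegral_swap
        have huncurry : (Function.uncurry fun x l =>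
            (Ico (u x) (v x)).indicator (fun l => ENNReal.ofReal (s * l ^ (s-1))) l)
            = {p : X × ℝ | u p.1 ≤ p.2 ∧ p.2 < v p.1}.indicator
                (fun p => ENNReal.ofReal (s * p.2 ^ (s-1))) := by
          ext p
          by_cases h : u p.1 ≤ p.2 ∧ p.2 < v p.1 <;>
            simp [Function.uncurry, Set.indicator_apply, Set.mem_Ico, h]
        rw [huncurry]
        apply Measurable.aemeasurable
        apply Measurable.indicator
        · exact ENNReal.measurable_ofReal.comp
            (measurable_const.mul (measurable_snd.pow_const (s-1)))
        · exact (measurableSet_le (hu.comp measurable_fst) measurable_snd).inter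
            (measurableSet_lt measurable_snd (hv.comp measurable_fst))
    _ = ∫⁻ l in Ioi (0:ℝ),
          ENNReal.ofReal (s * l ^ (s-1)) * (μ {x | l < v x} - μ {x | l < u x}) := by
        apply setLIntegral_congr_fun measurableSet_Ioi
        intro l hl
        beta_reduce
        have hmeasset : MeasurableSet {x | u x ≤ l ∧ l < v x} :=
          (measurableSet_le hu measurable_const).inter (measurableSet_lt measurable_const hv)
        have hix : (fun x => (Ico (u x) (v x)).indicator
            (fun l => ENNReal.ofReal (s * l ^ (s-1))) l)
            = {x | u x ≤ l ∧ l < v x}.indicator (fun _ => ENNReal.ofReal (s * l ^ (s-1))) := by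
          ext x
          by_cases h : u x ≤ l ∧ l < v x <;>
            simp [Set.indicator_apply, Set.mem_Ico, h]
        rw [hix, lintegral_indicator hmeasset, setLIntegral_const]
        congr 1
        have hsets : {x | u x ≤ l ∧ l < v x} = {x | l < v x} \ {x | l < u x} := by
          ext x
          simp only [mem_setOf_eq, mem_diff, not_lt]
          exact ⟨fun h => ⟨h.2, h.1⟩, fun h => ⟨h.2, h.1⟩⟩
        rw [hsets]
        exact measure_diff (fun x hx => lt_of_lt_of_le hx (huv x))
          (measurableSet_lt measurable_const hu).nullMeasurableSet (hufin l hl)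

lemma keyB (μ : Measure X) [SigmaFinite μ] {u v : X → ℝ}
    (hu : Measurable u) (hv : Measurable v) (hu0 : ∀ x, 0 ≤ u x) (huv : ∀ x, u x ≤ v x)
    (hufin : ∀ l : ℝ, 0 < l → μ {x | l < u x} ≠ ⊤)
    (hvfin : ∀ l : ℝ, 0 < l → μ {x | l < v x} ≠ ⊤)
    {s : ℝ} (hs : 0 < s)
    (hint : Integrable (fun x => v x ^ s - u x ^ s) μ) :
    IntegrableOn (fun l => s * l ^ (s-1) *
        ((μ {x | l < v x}).toReal - (μ {x | l < u x}).toReal)) (Ioi (0:ℝ)) ∧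
    ∫ x, (v x ^ s - u x ^ s) ∂μ
      = ∫ l in Ioi (0:ℝ), s * l ^ (s-1) *
          ((μ {x | l < v x}).toReal - (μ {x | l < u x}).toReal) := by
  set D : ℝ → ℝ := fun l => s * l ^ (s-1) *
      ((μ {x | l < v x}).toReal - (μ {x | l < u x}).toReal) with hD
  have hnn : ∀ x, 0 ≤ v x ^ s - u x ^ s := fun x =>
    sub_nonneg.2 (Real.rpow_le_rpow (hu0 x) (huv x) hs.le)
  have hanti : ∀ (w : X → ℝ), Antitone (fun l : ℝ => μ {x | l < w x}) := by
    intro w a b hab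
    exact measure_mono (fun x hx => lt_of_le_of_lt hab hx)
  have hDm : Measurable D := by
    apply (measurable_const.mul (measurable_id.pow_const (s-1))).mul
    exact ((hanti v).measurable.ennreal_toReal).sub ((hanti u).measurable.ennreal_toReal)
  have hDnn : ∀ l ∈ Ioi (0:ℝ), 0 ≤ D l := by
    intro l hl
    refine mul_nonneg (mul_nonneg hs.le (Real.rpow_nonneg (le_of_lt hl) _)) ?_
    exact sub_nonneg.2 (ENNReal.toReal_mono (hvfin l hl)
      (measure_mono fun x hx => lt_of_lt_of_le hx (huv x)))
  have hA := keyA μ hu hv hu0 huv hufin hs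
  have hofD : ∀ l ∈ Ioi (0:ℝ), ENNReal.ofReal (D l)
      = ENNReal.ofReal (s * l ^ (s-1)) * (μ {x | l < v x} - μ {x | l < u x}) := by
    intro l hl
    rw [hD, ENNReal.ofReal_mul (mul_nonneg hs.le (Real.rpow_nonneg (le_of_lt hl) _))]
    congr 1
    have hle : μ {x | l < u x} ≤ μ {x | l < v x} :=
      measure_mono fun x hx => lt_of_lt_of_le hx (huv x)
    rw [← ENNReal.toReal_sub_of_le hle (hvfin l hl)]
    exact ENNReal.ofReal_toReal ((tsub_le_self.trans_lt (hvfin l hl).lt_top).ne)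
  have hIeq : ∫⁻ l in Ioi (0:ℝ), ENNReal.ofReal (D l)
      = ∫⁻ x, ENNReal.ofReal (v x ^ s - u x ^ s) ∂μ := by
    rw [hA]
    exact setLIntegral_congr_fun measurableSet_Ioi hofD
  have hlt : ∫⁻ x, ENNReal.ofReal (v x ^ s - u x ^ s) ∂μ < ⊤ := by
    have h2 := hint.2
    rw [hasFiniteIntegral_iff_ofReal (ae_of_all _ hnn)] at h2
    exact h2
  have key2 : ∫ x, (v x ^ s - u x ^ s) ∂μ
      = (∫⁻ x, ENNReal.ofReal (v x ^ s - u x ^ s) ∂μ).toReal :=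
    integral_eq_lintegral_of_nonneg_ae (ae_of_all _ hnn) hint.1
  have hDnn' : 0 ≤ᵐ[volume.restrict (Ioi (0:ℝ))] D := by
    filter_upwards [self_mem_ae_restrict measurableSet_Ioi] with l hl using hDnn l hl
  have hDint : IntegrableOn D (Ioi (0:ℝ)) := by
    refine ⟨hDm.aestronglyMeasurable, ?_⟩
    rw [hasFiniteIntegral_iff_ofReal hDnn']
    rw [hIeq]
    exact hlt
  have key3 : ∫ l in Ioi (0:ℝ), D l
      = (∫⁻ l in Ioi (0:ℝ), ENNReal.ofReal (D l)).toReal :=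
    integral_eq_lintegral_of_nonneg_ae hDnn' hDm.aestronglyMeasurable
  exact ⟨hDint, by rw [key2, key3, hIeq]⟩


end NPaux

/-- Nazarov–Podkorytov / Karlin–Novikoff: if `∫ (f^{s₀} - g^{s₀}) dμ = 0` and the distribution
functions of `f` and `g` have a single crossing at `λ₀` (from `-` to `+`), then
`∫ (f^s - g^s) dμ ≥ 0` for all `s ≥ s₀` with `f^s - g^s` integrable. -/
theorem stmt2 {X : Type*} [MeasurableSpace X] (μ : Measure X) (f g : X → ℝ)
    (hf : Measurable f) (hg : Measurable g)
    (hf0 : ∀ x, 0 ≤ f x) (hg0 : ∀ x, 0 ≤ g x)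
    (hFfin : ∀ l : ℝ, 0 < l → μ {x | l < f x} < ⊤)
    (hGfin : ∀ l : ℝ, 0 < l → μ {x | l < g x} < ⊤)
    (s₀ : ℝ) (hs₀ : 0 < s₀)
    (hint₀ : Integrable (fun x => f x ^ s₀ - g x ^ s₀) μ)
    (hmean : ∫ x, (f x ^ s₀ - g x ^ s₀) ∂μ = 0)
    (l₀ : ℝ) (hl₀ : 0 < l₀)
    (hcross₁ : ∀ l ∈ Set.Ioo 0 l₀, μ {x | l < f x} ≤ μ {x | l < g x})
    (hcross₂ : ∀ l : ℝ, l₀ < l → μ {x | l < g x} ≤ μ {x | l < f x}) :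
    ∀ s : ℝ, s₀ ≤ s → Integrable (fun x => f x ^ s - g x ^ s) μ →
      0 ≤ ∫ x, (f x ^ s - g x ^ s) ∂μ := by
  intro s hss hints
  have hs : 0 < s := lt_of_lt_of_le hs₀ hss
  set M : X → ℝ := fun x => max (f x) (g x) with hM
  have hMm : Measurable M := hf.max hg
  have hMfin : ∀ l : ℝ, 0 < l → μ {x | l < M x} ≠ ⊤ := by
    intro l hl
    have hun : {x | l < M x} = {x | l < f x} ∪ {x | l < g x} := by
      ext x; simp [hM, lt_max_iff]
    rw [hun]
    exact (lt_of_le_of_lt (measure_union_le _ _)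
      (ENNReal.add_lt_top.2 ⟨hFfin l hl, hGfin l hl⟩)).ne
  have hSm : MeasurableSet {x | 0 < M x} := measurableSet_lt measurable_const hMm
  haveI : SigmaFinite (μ.restrict {x | 0 < M x}) :=
    NPaux.sigmaFinite_restrict μ M hMm hMfin
  set ν : Measure X := μ.restrict {x | 0 < M x} with hν
  -- measures of level sets agree for positive levels
  have hνeq : ∀ (w : X → ℝ), Measurable w → (∀ x, w x ≤ M x) →
      ∀ l : ℝ, 0 < l → ν {x | l < w x} = μ {x | l < w x} := by
    intro w hw hwM l hl
    rw [hν, Measure.restrict_apply (measurableSet_lt measurable_const hw)]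
    congr 1
    refine inter_eq_left.2 fun x hx => ?_
    exact lt_of_lt_of_le (lt_trans hl hx) (hwM x)
  have hνf := hνeq f hf (fun x => le_max_left _ _)
  have hνg := hνeq g hg (fun x => le_max_right _ _)
  have hνM := hνeq M hMm (fun x => le_refl _)
  -- functions vanish off the support set
  have hoff : ∀ t : ℝ, ∀ x, x ∉ {x | 0 < M x} → f x ^ t - g x ^ t = 0 := by
    intro t x hx
    simp only [mem_setOf_eq, not_lt] at hx
    have hfx : f x = 0 := le_antisymm (le_trans (le_max_left _ _) hx) (hf0 x)
    have hgx : g x = 0 := le_antisymm (le_trans (le_max_right _ _) hx) (hg0 x)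
    rw [hfx, hgx, sub_self]
  have hinteqν : ∀ t : ℝ, ∫ x, (f x ^ t - g x ^ t) ∂ν = ∫ x, (f x ^ t - g x ^ t) ∂μ := by
    intro t
    exact setIntegral_eq_integral_of_forall_compl_eq_zero (hoff t)
  -- the main identity: for positive t with integrability,
  have habs : ∀ t : ℝ, ∀ x, ‖M x ^ t - g x ^ t‖ ≤ ‖f x ^ t - g x ^ t‖ := by
    intro t x
    rcases le_total (f x) (g x) with h | h
    · rw [hM]; simp only [max_eq_right h, sub_self, norm_zero, norm_nonneg]
    · rw [hM]; simp only [max_eq_left h]; exact le_refl _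
  have habs' : ∀ t : ℝ, ∀ x, ‖M x ^ t - f x ^ t‖ ≤ ‖f x ^ t - g x ^ t‖ := by
    intro t x
    rcases le_total (f x) (g x) with h | h
    · rw [hM]; simp only [max_eq_right h]
      exact (norm_sub_rev _ _).le
    · rw [hM]; simp only [max_eq_left h, sub_self, norm_zero, norm_nonneg]
  have main : ∀ t : ℝ, 0 < t → Integrable (fun x => f x ^ t - g x ^ t) μ →
      IntegrableOn (fun l => t * l ^ (t-1) *
          ((ν {x | l < f x}).toReal - (ν {x | l < g x}).toReal)) (Ioi (0:ℝ)) ∧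
      ∫ x, (f x ^ t - g x ^ t) ∂μ
        = ∫ l in Ioi (0:ℝ), t * l ^ (t-1) *
            ((ν {x | l < f x}).toReal - (ν {x | l < g x}).toReal) := by
    intro t ht hintt
    have hinttν : Integrable (fun x => f x ^ t - g x ^ t) ν := hintt.restrict
    have hm1 : Integrable (fun x => M x ^ t - g x ^ t) ν := by
      refine hinttν.mono ?_ (ae_of_all _ (habs t))
      exact ((hMm.pow measurable_const).sub (hg.pow measurable_const)).aestronglyMeasurable
    have hm2 : Integrable (fun x => M x ^ t - f x ^ t) ν := by
      refine hinttν.mono ?_ (ae_of_all _ (habs' t))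
      exact ((hMm.pow measurable_const).sub (hf.pow measurable_const)).aestronglyMeasurable
    have hgfin : ∀ l : ℝ, 0 < l → ν {x | l < g x} ≠ ⊤ := fun l hl => by
      rw [hνg l hl]; exact (hGfin l hl).ne
    have hffin : ∀ l : ℝ, 0 < l → ν {x | l < f x} ≠ ⊤ := fun l hl => by
      rw [hνf l hl]; exact (hFfin l hl).ne
    have hMfin' : ∀ l : ℝ, 0 < l → ν {x | l < M x} ≠ ⊤ := fun l hl => by
      rw [hνM l hl]; exact hMfin l hl
    obtain ⟨hI1, hE1⟩ := NPaux.keyB ν hg hMm hg0 (fun x => le_max_right _ _)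
      hgfin hMfin' ht hm1
    obtain ⟨hI2, hE2⟩ := NPaux.keyB ν hf hMm hf0 (fun x => le_max_left _ _)
      hffin hMfin' ht hm2
    have hsplit : ∫ x, (f x ^ t - g x ^ t) ∂ν
        = (∫ x, (M x ^ t - g x ^ t) ∂ν) - ∫ x, (M x ^ t - f x ^ t) ∂ν := by
      rw [← integral_sub hm1 hm2]
      exact integral_congr_ae (ae_of_all _ fun x => by ring)
    constructor
    · exact (hI1.sub hI2).congr (ae_of_all _ fun l => by simp only [Pi.sub_apply]; ring)
    · rw [← hinteqν t, hsplit, hE1, hE2, ← integral_sub hI1 hI2]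
      exact integral_congr_ae (ae_of_all _ fun l => by ring)
  obtain ⟨J₀, E₀⟩ := main s₀ hs₀ hint₀
  obtain ⟨J, E⟩ := main s hs hints
  rw [E]
  have E₀' : ∫ l in Ioi (0:ℝ), s₀ * l ^ (s₀-1) *
      ((ν {x | l < f x}).toReal - (ν {x | l < g x}).toReal) = 0 := by
    rw [← E₀, hmean]
  set C : ℝ := (s / s₀) * l₀ ^ (s - s₀) with hC
  have hCpos : 0 < C := by
    apply mul_pos (div_pos hs hs₀)
    exact Real.rpow_pos_of_pos hl₀ _
  have hmono : ∀ᵐ l ∂(volume.restrict (Ioi (0:ℝ))),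
      C * (s₀ * l ^ (s₀-1) * ((ν {x | l < f x}).toReal - (ν {x | l < g x}).toReal))
        ≤ s * l ^ (s-1) * ((ν {x | l < f x}).toReal - (ν {x | l < g x}).toReal) := by
    filter_upwards [self_mem_ae_restrict measurableSet_Ioi] with l hl
    have hlpos : (0:ℝ) < l := hl
    set H : ℝ := (ν {x | l < f x}).toReal - (ν {x | l < g x}).toReal with hH
    set K : ℝ := l ^ (s₀-1) * H with hK
    have hladd : l ^ (s-1) = l ^ (s-s₀) * l ^ (s₀-1) := by
      rw [← Real.rpow_add hlpos]
      congr 1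
      ring
    have hinner : l₀ ^ (s-s₀) * K ≤ l ^ (s-s₀) * K := by
      rcases lt_trichotomy l l₀ with hll | hll | hll
      · have hHle : H ≤ 0 := by
          rw [hH]
          refine sub_nonpos.2 (ENNReal.toReal_mono ?_ ?_)
          · rw [hνg l hlpos]; exact (hGfin l hlpos).ne
          · rw [hνf l hlpos, hνg l hlpos]
            exact hcross₁ l ⟨hlpos, hll⟩
        have hKle : K ≤ 0 := mul_nonpos_iff.2
          (Or.inl ⟨Real.rpow_nonneg hlpos.le _, hHle⟩)
        have hle : l ^ (s-s₀) ≤ l₀ ^ (s-s₀) :=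
          Real.rpow_le_rpow hlpos.le hll.le (by linarith)
        have h1 : (l₀ ^ (s-s₀) - l ^ (s-s₀)) * K ≤ 0 :=
          mul_nonpos_iff.2 (Or.inl ⟨sub_nonneg.2 hle, hKle⟩)
        nlinarith [h1]
      · rw [hll]
      · have hHge : 0 ≤ H := by
          rw [hH]
          refine sub_nonneg.2 (ENNReal.toReal_mono ?_ ?_)
          · rw [hνf l hlpos]; exact (hFfin l hlpos).ne
          · rw [hνf l hlpos, hνg l hlpos]
            exact hcross₂ l hll
        have hKge : 0 ≤ K := mul_nonneg (Real.rpow_nonneg hlpos.le _) hHge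
        have hle : l₀ ^ (s-s₀) ≤ l ^ (s-s₀) :=
          Real.rpow_le_rpow hl₀.le hll.le (by linarith)
        exact mul_le_mul_of_nonneg_right hle hKge
    calc C * (s₀ * l ^ (s₀-1) * H) = s * (l₀ ^ (s-s₀) * K) := by
          rw [hC, hK]
          field_simp
      _ ≤ s * (l ^ (s-s₀) * K) := mul_le_mul_of_nonneg_left hinner hs.le
      _ = s * l ^ (s-1) * H := by rw [hladd, hK]; ring
  have hfinal := integral_mono_ae (J₀.const_mul C) J hmono
  rw [integral_const_mul, E₀', mul_zero] at hfinal
  exact hfinal
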